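/- Let (Ω, μ) be a probability space, let X₁,…,Xₙ : Ω → ℝ be square-integrable random variables (each MemLp with exponent 2), let a₁,…,aₙ be real numbers, and let s₁,…,s_K be nonempty, pairwise disjoint subsets of {1,…,n} whose union is {1,…,n}. Then for every real S > 0: ∑_{k=1}^{K} Var(∑_{i∈s_k} aᵢ·Xᵢ)/(|s_k|·S) ≤ (1/S)·∑_{i=1}^{n} Var(aᵢ·Xᵢ). In particular, when each group s_k receives a number of samples proportional to its size, S_k = |s_k|·S, the standard error of the grouped estimator is less than or equal to the standard error of the ungrouped estimator: ε_G ≤ ε_NG. -/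

import Mathlib

open MeasureTheory ProbabilityTheory Finset

lemma variance_eq_sq_eLpNorm {Ω : Type*} [MeasurableSpace Ω] (μ : Measure Ω) (X : Ω → ℝ) :
    variance X μ = ((eLpNorm (fun ω => X ω - μ[X]) 2 μ).toReal) ^ 2 := by
  rw [variance, ← ENNReal.toReal_pow]
  congr 1
  rw [eLpNorm_eq_lintegral_rpow_enorm_toReal two_ne_zero ENNReal.ofNat_ne_top, ← ENNReal.rpow_natCast,
    ← ENNReal.rpow_mul]
  norm_num [evariance]

lemma variance_finset_sum_le {Ω : Type*} [MeasurableSpace Ω] (μ : Measure Ω)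
    [IsProbabilityMeasure μ] {ι : Type*} (Y : ι → Ω → ℝ) (t : Finset ι)
    (hY : ∀ i ∈ t, MemLp (Y i) 2 μ) :
    variance (fun ω => ∑ i ∈ t, Y i ω) μ ≤ (t.card : ℝ) * ∑ i ∈ t, variance (Y i) μ := by
  set f : ι → Ω → ℝ := fun i ω => Y i ω - μ[Y i] with hf
  have hfmem : ∀ i ∈ t, MemLp (f i) 2 μ := fun i hi => (hY i hi).sub (memLp_const _)
  have hint : ∀ i ∈ t, Integrable (Y i) μ := fun i hi => (hY i hi).integrable one_le_two
  have hμsum : μ[fun ω => ∑ i ∈ t, Y i ω] = ∑ i ∈ t, μ[Y i] :=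
    integral_finset_sum t hint
  have hkey : (fun ω => (∑ i ∈ t, Y i ω) - μ[fun ω => ∑ i ∈ t, Y i ω]) = ∑ i ∈ t, f i := by
    funext ω
    rw [hμsum, Finset.sum_apply]
    simp [f, Finset.sum_sub_distrib]
  rw [variance_eq_sq_eLpNorm, hkey]
  have htri : eLpNorm (∑ i ∈ t, f i) 2 μ ≤ ∑ i ∈ t, eLpNorm (f i) 2 μ :=
    eLpNorm_sum_le (fun i hi => (hfmem i hi).1) one_le_two
  have hfin : ∀ i ∈ t, eLpNorm (f i) 2 μ ≠ ⊤ := fun i hi => (hfmem i hi).2.ne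
  have hsfin : (∑ i ∈ t, eLpNorm (f i) 2 μ) ≠ ⊤ := by
    exact (ENNReal.sum_lt_top.2 fun i hi => lt_top_iff_ne_top.2 (hfin i hi)).ne
  have h1 : (eLpNorm (∑ i ∈ t, f i) 2 μ).toReal ≤ ∑ i ∈ t, (eLpNorm (f i) 2 μ).toReal := by
    rw [← ENNReal.toReal_sum hfin]
    exact ENNReal.toReal_mono hsfin htri
  calc (eLpNorm (∑ i ∈ t, f i) 2 μ).toReal ^ 2
      ≤ (∑ i ∈ t, (eLpNorm (f i) 2 μ).toReal) ^ 2 := by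
        apply pow_le_pow_left₀ ENNReal.toReal_nonneg h1
    _ ≤ (t.card : ℝ) * ∑ i ∈ t, (eLpNorm (f i) 2 μ).toReal ^ 2 :=
        sq_sum_le_card_mul_sum_sq
    _ = (t.card : ℝ) * ∑ i ∈ t, variance (Y i) μ := by
        congr 1
        exact Finset.sum_congr rfl fun i hi => (variance_eq_sq_eLpNorm μ (Y i)).symm

/-- If each group `s k` receives `|s k| * S` samples, the squared standard error of the
grouped estimator is at most that of the ungrouped estimator using `S` samples per variable. -/
theorem grouped_variance_error_le {Ω : Type*} [MeasurableSpace Ω]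
    (μ : Measure Ω) [IsProbabilityMeasure μ]
    {n K : ℕ} (X : Fin n → Ω → ℝ) (hX : ∀ i, MemLp (X i) 2 μ)
    (a : Fin n → ℝ)
    (s : Fin K → Finset (Fin n))
    (hne : ∀ k, (s k).Nonempty)
    (hdisj : ∀ k l, k ≠ l → Disjoint (s k) (s l))
    (hcover : ∀ i, ∃ k, i ∈ s k)
    (S : ℝ) (hS : 0 < S) :
    ∑ k, variance (fun ω => ∑ i ∈ s k, a i * X i ω) μ / (((s k).card : ℝ) * S) ≤
      (1 / S) * ∑ i, variance (fun ω => a i * X i ω) μ := by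
  have haX : ∀ i, MemLp (fun ω => a i * X i ω) 2 μ := fun i => (hX i).const_mul (a i)
  have hstep : ∀ k, variance (fun ω => ∑ i ∈ s k, a i * X i ω) μ / (((s k).card : ℝ) * S)
      ≤ (1 / S) * ∑ i ∈ s k, variance (fun ω => a i * X i ω) μ := by
    intro k
    have hc : (0:ℝ) < (s k).card := by
      exact_mod_cast Finset.card_pos.2 (hne k)
    rw [div_le_iff₀ (by positivity)]
    have := variance_finset_sum_le μ (fun i ω => a i * X i ω) (s k) (fun i _ => haX i)
    calc variance (fun ω => ∑ i ∈ s k, a i * X i ω) μ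
        ≤ ((s k).card : ℝ) * ∑ i ∈ s k, variance (fun ω => a i * X i ω) μ := this
      _ = (1 / S) * (∑ i ∈ s k, variance (fun ω => a i * X i ω) μ) * (((s k).card : ℝ) * S) := by
          field_simp
  calc ∑ k, variance (fun ω => ∑ i ∈ s k, a i * X i ω) μ / (((s k).card : ℝ) * S)
      ≤ ∑ k, (1 / S) * ∑ i ∈ s k, variance (fun ω => a i * X i ω) μ :=
        Finset.sum_le_sum fun k _ => hstep k
    _ = (1 / S) * ∑ k, ∑ i ∈ s k, variance (fun ω => a i * X i ω) μ := by
        rw [Finset.mul_sum]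
    _ = (1 / S) * ∑ i, variance (fun ω => a i * X i ω) μ := by
        congr 1
        rw [← Finset.sum_biUnion (fun k _ l _ hkl => hdisj k l hkl)]
        apply Finset.sum_congr _ (fun _ _ => rfl)
        apply Finset.eq_univ_iff_forall.2
        intro i
        obtain ⟨k, hk⟩ := hcover i
        exact Finset.mem_biUnion.2 ⟨k, Finset.mem_univ k, hk⟩
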